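/- Let X have the Pareto distribution with parameters α > 0 and δ > 0. Then Q1(X) − 3·IQR(X) = δ·4^{1/α}·(4·3^{−1/α} − 3) ≤ δ, and consequently p_eL(X) = P(X < Q1(X) − 3·IQR(X)) = 0. -/

import Mathlib

open MeasureTheory Real

variable {Ω : Type*} [MeasurableSpace Ω]

/-- Generalized inverse of the c.d.f.: `F⁻(p) = inf {x : F(x) ≥ p}`. -/
noncomputable def quantile (μ : Measure Ω) (X : Ω → ℝ) (p : ℝ) : ℝ :=
  sInf {x : ℝ | p ≤ (μ {ω | X ω ≤ x}).toReal}

noncomputable def Q1 (μ : Measure Ω) (X : Ω → ℝ) : ℝ := quantile μ X (1/4)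

noncomputable def Q3 (μ : Measure Ω) (X : Ω → ℝ) : ℝ := quantile μ X (3/4)

noncomputable def IQR (μ : Measure Ω) (X : Ω → ℝ) : ℝ := Q3 μ X - Q1 μ X

/-- Probability of a left extreme outlier. -/
noncomputable def peL (μ : Measure Ω) (X : Ω → ℝ) : ℝ :=
  (μ {ω | X ω < Q1 μ X - 3 * IQR μ X}).toReal

/-- Probability of a right extreme outlier. -/
noncomputable def peR (μ : Measure Ω) (X : Ω → ℝ) : ℝ :=
  (μ {ω | Q3 μ X + 3 * IQR μ X < X ω}).toReal

noncomputable def pe2 (μ : Measure Ω) (X : Ω → ℝ) : ℝ := peL μ X + peR μ X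
lemma pareto_quantile (μ : Measure Ω) [IsProbabilityMeasure μ]
    (X : Ω → ℝ) (hX : Measurable X) (α δ : ℝ) (ha : 0 < α) (hd : 0 < δ)
    (htail : ∀ x : ℝ, δ ≤ x → (μ {ω | x < X ω}).toReal = (δ / x) ^ α)
    (hlow : ∀ x : ℝ, x < δ → μ {ω | X ω ≤ x} = 0)
    (p : ℝ) (hp0 : 0 < p) (hp1 : p < 1) :
    quantile μ X p = δ * (1 - p) ^ (-(1/α)) := by
  have hq : (0:ℝ) < 1 - p := by linarith
  set c : ℝ := (1 - p) ^ (1/α) with hc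
  have hc0 : 0 < c := rpow_pos_of_pos hq _
  have hc1 : c ≤ 1 := rpow_le_one hq.le (by linarith) (by positivity)
  have hqc : (1 - p) ^ (-(1/α)) = c⁻¹ := by
    rw [rpow_neg hq.le]
  set q : ℝ := δ * (1 - p) ^ (-(1/α)) with hqdef
  have hqe : q = δ / c := by rw [hqdef, hqc, div_eq_mul_inv]
  have hq0 : 0 < q := by rw [hqe]; positivity
  have hdq : δ ≤ q := by
    rw [hqe, le_div_iff₀ hc0]
    nlinarith
  have hF : ∀ x : ℝ, δ ≤ x → (μ {ω | X ω ≤ x}).toReal = 1 - (δ/x)^α := by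
    intro x hx
    have hcpl : {ω | X ω ≤ x} = {ω | x < X ω}ᶜ := by ext ω; simp
    have hm : MeasurableSet {ω | x < X ω} := measurableSet_lt measurable_const hX
    rw [hcpl, measure_compl hm (measure_ne_top μ _), measure_univ,
      ENNReal.toReal_sub_of_le prob_le_one ENNReal.one_ne_top, ENNReal.toReal_one,
      htail x hx]
  have hset : {x : ℝ | p ≤ (μ {ω | X ω ≤ x}).toReal} = Set.Ici q := by
    ext x
    simp only [Set.mem_setOf_eq, Set.mem_Ici]
    constructor
    · intro hpx
      by_contra hxq
      push_neg at hxq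
      rcases lt_or_ge x δ with hxd | hxd
      · rw [hlow x hxd] at hpx
        simp at hpx
        linarith
      · rw [hF x hxd] at hpx
        have hx0 : 0 < x := lt_of_lt_of_le hd hxd
        have h1 : (δ/x)^α ≤ 1 - p := by linarith
        have h2 : δ/x ≤ c := by
          have h := rpow_le_rpow (by positivity : (0:ℝ) ≤ (δ/x)^α) h1 (by positivity : (0:ℝ) ≤ 1/α)
          rwa [← rpow_mul (by positivity : (0:ℝ) ≤ δ/x), mul_one_div, div_self ha.ne', rpow_one] at h
        have h3 : q ≤ x := by
          rw [hqe, div_le_iff₀ hc0]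
          rw [div_le_iff₀ hx0] at h2
          linarith [mul_comm x c]
        linarith
    · intro hqx
      have hxd : δ ≤ x := le_trans hdq hqx
      have hx0 : 0 < x := lt_of_lt_of_le hd hxd
      rw [hF x hxd]
      have h2 : δ/x ≤ c := by
        rw [div_le_iff₀ hx0]
        rw [hqe, div_le_iff₀ hc0] at hqx
        nlinarith
      have h3 : (δ/x)^α ≤ (1-p) := by
        calc (δ/x)^α ≤ c^α := rpow_le_rpow (by positivity) h2 ha.le
        _ = 1 - p := by
            rw [hc, ← rpow_mul hq.le, one_div, inv_mul_cancel₀ ha.ne', rpow_one]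
      linarith
  rw [quantile, hset, csInf_Ici]

theorem pareto_peL_zero (μ : Measure Ω) [IsProbabilityMeasure μ]
    (X : Ω → ℝ) (hX : Measurable X) (α δ : ℝ) (ha : 0 < α) (hd : 0 < δ)
    (htail : ∀ x : ℝ, δ ≤ x → (μ {ω | x < X ω}).toReal = (δ / x) ^ α)
    (hlow : ∀ x : ℝ, x < δ → μ {ω | X ω ≤ x} = 0) :
    Q1 μ X - 3 * IQR μ X = δ * (4:ℝ) ^ (1/α) * (4 * (3:ℝ) ^ (-1/α) - 3) ∧
    Q1 μ X - 3 * IQR μ X ≤ δ ∧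
    peL μ X = 0 := by
  set t : ℝ := 1/α with htdef
  have ht : 0 < t := by positivity
  have hQ1 : Q1 μ X = δ * ((4:ℝ)/3) ^ t := by
    rw [Q1, pareto_quantile μ X hX α δ ha hd htail hlow (1/4) (by norm_num) (by norm_num)]
    congr 1
    rw [show (1:ℝ) - 1/4 = ((4:ℝ)/3)⁻¹ by norm_num, inv_rpow (by norm_num),
      ← rpow_neg (by norm_num), neg_neg]
  have hQ3 : Q3 μ X = δ * (4:ℝ) ^ t := by
    rw [Q3, pareto_quantile μ X hX α δ ha hd htail hlow (3/4) (by norm_num) (by norm_num)]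
    congr 1
    rw [show (1:ℝ) - 3/4 = ((4:ℝ))⁻¹ by norm_num, inv_rpow (by norm_num),
      ← rpow_neg (by norm_num), neg_neg]
  set a : ℝ := ((4:ℝ)/3) ^ t with hadef
  set B : ℝ := (3:ℝ) ^ t with hBdef
  have hB0 : 0 < B := rpow_pos_of_pos (by norm_num) _
  have ha0 : 0 < a := rpow_pos_of_pos (by norm_num) _
  have hA : (4:ℝ) ^ t = a * B := by
    rw [hadef, hBdef, ← mul_rpow (by norm_num) (by norm_num)]
    norm_num
  have hBinv : (3:ℝ) ^ (-1/α) = B⁻¹ := by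
    rw [neg_div, ← htdef, rpow_neg (by norm_num : (0:ℝ) ≤ 3)]
  have ha1 : 1 ≤ a := one_le_rpow (by norm_num) ht.le
  have haB : a ≤ B := rpow_le_rpow (by norm_num) (by norm_num) ht.le
  have hkey : 4 * a - 3 * (a * B) ≤ 1 := by
    rcases le_or_gt B (4/3) with hB | hB
    · nlinarith [mul_nonneg (sub_nonneg.2 haB) (by linarith : (0:ℝ) ≤ 4 - 3*B),
        mul_nonneg (by linarith : (0:ℝ) ≤ 3*B - 1) (by linarith : (0:ℝ) ≤ B - 1)]
    · nlinarith [mul_nonneg ha0.le (by linarith : (0:ℝ) ≤ 3*B - 4)]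
  have heq : Q1 μ X - 3 * IQR μ X = δ * (4:ℝ) ^ (1/α) * (4 * (3:ℝ) ^ (-1/α) - 3) := by
    rw [IQR, hQ1, hQ3, ← htdef, hBinv, hA]
    field_simp
    ring
  refine ⟨heq, ?_, ?_⟩
  · rw [heq, ← htdef, hBinv, hA]
    have h2 : δ * (a * B) * (4 * B⁻¹ - 3) = δ * (4 * a - 3 * (a * B)) := by
      field_simp
    rw [h2]
    nlinarith
  · have hle : Q1 μ X - 3 * IQR μ X ≤ δ := by
      rw [heq, ← htdef, hBinv, hA]
      have h2 : δ * (a * B) * (4 * B⁻¹ - 3) = δ * (4 * a - 3 * (a * B)) := by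
        field_simp
      rw [h2]
      nlinarith
    have hz : μ {ω | X ω < δ} = 0 := by
      have hsub : {ω | X ω < δ} ⊆ ⋃ n : ℕ, {ω | X ω ≤ δ - 1/(n+1)} := by
        intro ω hω
        simp only [Set.mem_setOf_eq] at hω
        obtain ⟨n, hn⟩ := exists_nat_one_div_lt (show (0:ℝ) < δ - X ω by linarith)
        exact Set.mem_iUnion.2 ⟨n, by simp only [Set.mem_setOf_eq]; linarith⟩
      refine le_antisymm ?_ zero_le
      calc μ {ω | X ω < δ} ≤ μ (⋃ n : ℕ, {ω | X ω ≤ δ - 1/(n+1)}) := measure_mono hsub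
        _ = 0 := measure_iUnion_null fun n => hlow _ (by
            have : (0:ℝ) < 1/((n:ℝ)+1) := by positivity
            linarith)
    rw [peL]
    have : μ {ω | X ω < Q1 μ X - 3 * IQR μ X} = 0 :=
      measure_mono_null (fun ω hω => lt_of_lt_of_le hω hle) hz
    rw [this, ENNReal.toReal_zero]
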